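/- Every infinite-dimensional separable Banach space admits an overcomplete set; moreover it admits an overcomplete set of cardinality continuum in which every infinite subset is linearly dense. -/

import Mathlib

open Cardinal Set

universe u

/-- The density character of a topological space: the least cardinality of a dense subset. -/
noncomputable def dens (X : Type u) [TopologicalSpace X] : Cardinal.{u} :=
  ⨅ s : {s : Set X // Dense s}, Cardinal.mk ↥(s.1)

/-- A set is linearly dense if its closed linear span is the whole space. -/
def LinearlyDense {X : Type u} [NormedAddCommGroup X] [NormedSpace ℝ X] (S : Set X) : Prop :=
  (Submodule.span ℝ S).topologicalClosure = ⊤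

/-- A set `Y` is overcomplete in `X` if `|Y| = dens X` and every subset of `Y` of full
cardinality is linearly dense in `X`. -/
def Overcomplete {X : Type u} [NormedAddCommGroup X] [NormedSpace ℝ X] (Y : Set X) : Prop :=
  Cardinal.mk ↥Y = dens X ∧ ∀ Z ⊆ Y, Cardinal.mk ↥Z = Cardinal.mk ↥Y → LinearlyDense Z

lemma aux_dense_span {X : Type u} [NormedAddCommGroup X] [NormedSpace ℝ X] (S : Set X)
    (h : ∀ φ : X →L[ℝ] ℝ, (∀ z ∈ S, φ z = 0) → φ = 0) :
    (Submodule.span ℝ S).topologicalClosure = ⊤ := by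
  by_contra hne
  obtain ⟨x, hx⟩ : ∃ x, x ∉ (Submodule.span ℝ S).topologicalClosure := by
    by_contra h'
    push_neg at h'
    exact hne (Submodule.eq_top_iff'.2 h')
  set M := (Submodule.span ℝ S).topologicalClosure with hM
  obtain ⟨φ, u, hu1, hu2⟩ := geometric_hahn_banach_closed_point
    M.convex (Submodule.isClosed_topologicalClosure _) hx
  have hu0 : 0 < u := by simpa using hu1 0 M.zero_mem
  have hφM : ∀ y ∈ M, φ y = 0 := by
    intro y hy
    by_contra hne'
    have h2 := hu1 _ (M.smul_mem ((u + 1) / φ y) hy)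
    rw [map_smul, smul_eq_mul, div_mul_cancel₀ _ hne'] at h2
    linarith
  have hz : φ = 0 := h φ fun z hz =>
    hφM z ((Submodule.le_topologicalClosure _) (Submodule.subset_span hz))
  rw [hz] at hu2
  simp at hu2
  linarith

/-- every infinite-dimensional separable Banach space admits an overcomplete
set; moreover it admits a set of cardinality continuum all of whose infinite subsets are
linearly dense. -/
theorem stmt3 {X : Type u} [NormedAddCommGroup X] [NormedSpace ℝ X] [CompleteSpace X]
    [TopologicalSpace.SeparableSpace X] (hX : ¬ FiniteDimensional ℝ X) :
    (∃ Y : Set X, Overcomplete Y) ∧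
    (∃ Y : Set X, Cardinal.mk ↥Y = Cardinal.continuum ∧
      ∀ Z ⊆ Y, Z.Infinite → LinearlyDense Z) := by
  have hnt : Nontrivial X := by
    by_contra h
    rw [not_nontrivial_iff_subsingleton] at h
    exact hX inferInstance
  have hne : Nonempty X := ⟨0⟩
  obtain ⟨d, hd⟩ := TopologicalSpace.exists_dense_seq X
  set e : ℕ → X := fun n => d (Nat.unpair n).1 with he_def
  set x : ℕ → X := fun n => (1 + ‖e n‖)⁻¹ • e n with hx_def
  have hx1 : ∀ n, ‖x n‖ ≤ 1 := by
    intro n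
    have h0 : (0:ℝ) < 1 + ‖e n‖ := by positivity
    rw [hx_def]
    simp only [norm_smul, norm_inv, Real.norm_of_nonneg h0.le]
    rw [inv_mul_le_iff₀ h0]
    linarith
  set p : FormalMultilinearSeries ℝ ℝ X :=
    fun n => ContinuousMultilinearMap.mkPiRing ℝ (Fin n) (x n) with hp_def
  have hpr : 1 ≤ p.radius := by
    have := p.le_radius_of_bound 1 (r := 1) (fun n => by
      simp [hp_def, ContinuousMultilinearMap.norm_mkPiRing, hx1 n])
    simpa using this
  set f : ℝ → X := p.sum with hf_def
  have hf : HasFPowerSeriesOnBall f p 0 1 :=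
    (p.hasFPowerSeriesOnBall (lt_of_lt_of_le zero_lt_one hpr)).mono zero_lt_one hpr
  have hball : Metric.eball (0:ℝ) 1 = Metric.ball (0:ℝ) 1 := by
    rw [← ENNReal.coe_one, Metric.eball_coe, NNReal.coe_one]
  have key : ∀ (φ : X →L[ℝ] ℝ) (c : ℝ) (T : Set ℝ), T ⊆ Set.Icc (0:ℝ) 2⁻¹ → T.Infinite →
      (∀ t ∈ T, φ (f t) = c) → φ = 0 := by
    intro φ c T hTsub hTinf hTc
    set q := φ.compFormalMultilinearSeries p - constFormalMultilinearSeries ℝ ℝ c with hq_def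
    have hg : HasFPowerSeriesOnBall (fun t => φ (f t) - c) q 0 1 :=
      (φ.comp_hasFPowerSeriesOnBall hf).sub (hasFPowerSeriesOnBall_const.mono zero_lt_one le_top)
    obtain ⟨t₀, ht₀K, hacc⟩ := hTinf.exists_accPt_of_subset_isCompact isCompact_Icc hTsub
    have ht₀ : t₀ ∈ Metric.eball (0:ℝ) 1 := by
      rw [hball, Metric.mem_ball, Real.dist_eq, sub_zero]
      have h1 := ht₀K.1
      have h2 := ht₀K.2
      rw [abs_lt]; constructor <;> [linarith; (norm_num at h2 ⊢; linarith)]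
    have hfreq : ∃ᶠ z in nhdsWithin t₀ {t₀}ᶜ, (fun t => φ (f t) - c) z = 0 := by
      have h1 : ∃ᶠ z in nhdsWithin t₀ {t₀}ᶜ, z ∈ T := Filter.frequently_mem_iff_neBot.2 hacc
      exact h1.mono fun z hz => by simp [hTc z hz]
    have hpre : IsPreconnected (Metric.eball (0:ℝ) 1) := by
      rw [hball]; exact (convex_ball (0:ℝ) 1).isPreconnected
    have hEq : Set.EqOn (fun t => φ (f t) - c) 0 (Metric.eball (0:ℝ) 1) :=
      hg.analyticOnNhd.eqOn_zero_of_preconnected_of_frequently_eq_zero hpre ht₀ hfreq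
    have h0mem : (0:ℝ) ∈ Metric.eball (0:ℝ) 1 := by
      rw [hball]; exact Metric.mem_ball_self one_pos
    have hev : (fun t => φ (f t) - c) =ᶠ[nhds (0:ℝ)] 0 :=
      Filter.eventuallyEq_of_mem (EMetric.isOpen_ball.mem_nhds h0mem) hEq
    have hq0 : q = 0 := hg.hasFPowerSeriesAt.eq_zero_of_eventually hev
    have hco : ∀ n : ℕ, n ≠ 0 → φ (x n) = 0 := by
      intro n hn
      have hAB : φ.compFormalMultilinearSeries p = constFormalMultilinearSeries ℝ ℝ c :=
        sub_eq_zero.mp hq0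
      have h1 := congrFun hAB n
      have h2 := congrArg (fun m : ContinuousMultilinearMap ℝ (fun _ : Fin n => ℝ) ℝ =>
        m fun _ => (1:ℝ)) h1
      simp only [ContinuousLinearMap.compFormalMultilinearSeries_apply,
        ContinuousLinearMap.compContinuousMultilinearMap_coe, Function.comp_apply,
        constFormalMultilinearSeries_apply_of_nonzero hn,
        ContinuousMultilinearMap.mkPiRing_apply, Finset.prod_const_one, one_smul,
        ContinuousMultilinearMap.zero_apply] at h2
      simpa [p] using h2
    have hdm : ∀ m, φ (d m) = 0 := by
      intro m
      have hn : Nat.pair m 1 ≠ 0 := by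
        intro h
        have := congrArg (fun k => (Nat.unpair k).2) h
        simp [Nat.unpair_pair] at this
      have h1 := hco _ hn
      rw [hx_def] at h1
      simp only [he_def, Nat.unpair_pair] at h1
      rw [map_smul, smul_eq_mul, mul_eq_zero] at h1
      rcases h1 with h1 | h1
      · exfalso
        have h0 : (0:ℝ) < 1 + ‖d m‖ := by positivity
        rw [inv_eq_zero] at h1
        linarith
      · exact h1
    have hext : ⇑φ = (fun _ => (0:ℝ)) :=
      Continuous.ext_on hd φ.continuous continuous_const (by rintro _ ⟨m, rfl⟩; exact hdm m)
    ext y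
    exact congrFun hext y
  set S := Set.Ioo (0:ℝ) 2⁻¹ with hS_def
  set Y := f '' S with hY_def
  have hY2 : ∀ Z ⊆ Y, Z.Infinite → (Submodule.span ℝ Z).topologicalClosure = ⊤ := by
    intro Z hZY hZinf
    apply aux_dense_span
    intro φ hφ
    set T := {t | t ∈ S ∧ f t ∈ Z} with hT_def
    have hTinf : T.Infinite := by
      by_contra h
      rw [Set.not_infinite] at h
      have hZsub : Z ⊆ f '' T := by
        intro z hz
        obtain ⟨t, htS, hft⟩ := hZY hz
        exact ⟨t, ⟨htS, hft ▸ hz⟩, hft⟩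
      exact hZinf ((h.image f).subset hZsub)
    exact key φ 0 T (fun t ht => ⟨ht.1.1.le, ht.1.2.le⟩) hTinf (fun t ht => hφ _ ht.2)
  obtain ⟨x₀, hx₀⟩ := exists_ne (0 : X)
  obtain ⟨φ₀, hφ₀n, hφ₀x⟩ := exists_dual_vector ℝ x₀ (norm_ne_zero_iff.2 hx₀)
  have hφ₀ : φ₀ ≠ 0 := by
    intro h
    rw [h] at hφ₀x
    simp only [ContinuousLinearMap.zero_apply] at hφ₀x
    exact hx₀ (norm_eq_zero.1 hφ₀x.symm)
  have hfib : ∀ y : X, {t | t ∈ S ∧ f t = y}.Finite := by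
    intro y
    by_contra h
    exact hφ₀ (key φ₀ (φ₀ y) _ (fun t ht => ⟨ht.1.1.le, ht.1.2.le⟩) h (fun t ht => by rw [ht.2]))
  have hmkS : #(↥S) = Cardinal.continuum := Cardinal.mk_Ioo_real (by norm_num)
  have hup : #(↥Y) ≤ Cardinal.continuum := by
    have hemb : Nonempty (↥Y ↪ ↥S) := by
      refine ⟨⟨fun y => ⟨y.2.choose, y.2.choose_spec.1⟩, ?_⟩⟩
      intro y1 y2 h
      have h1 := y1.2.choose_spec.2
      have h2 := y2.2.choose_spec.2
      apply Subtype.ext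
      rw [← h1, ← h2]
      rw [Subtype.mk.injEq] at h
      rw [h]
    have hle := Cardinal.lift_mk_le'.2 hemb
    rwa [Cardinal.lift_uzero, hmkS, Cardinal.lift_continuum] at hle
  have hlow : Cardinal.continuum ≤ #(↥Y) := by
    set F : ↥S → ↥Y := fun t => ⟨f ↑t, ⟨↑t, t.2, rfl⟩⟩ with hF_def
    have hfibF : ∀ y : ↥Y, (F ⁻¹' {y}).Finite := by
      intro y
      have heq : F ⁻¹' {y} = Subtype.val ⁻¹' {t | t ∈ S ∧ f t = ↑y} := by
        ext t
        simp [hF_def, Subtype.ext_iff, t.2]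
      rw [heq]
      exact (hfib ↑y).preimage Subtype.val_injective.injOn
    have hmain : Cardinal.lift.{u} #(↥S) ≤ Cardinal.lift.{0} #(↥Y) * Cardinal.aleph0 :=
      Cardinal.lift_mk_le_lift_mk_mul_of_lift_mk_preimage_le F (fun y => by
        calc Cardinal.lift.{u} #(↥(F ⁻¹' {y})) ≤ Cardinal.lift.{u} Cardinal.aleph0 :=
              Cardinal.lift_le.2 (hfibF y).lt_aleph0.le
          _ = Cardinal.aleph0 := Cardinal.lift_aleph0)
    rw [hmkS, Cardinal.lift_continuum, Cardinal.lift_uzero] at hmain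
    have haleph : Cardinal.aleph0 ≤ #(↥Y) := by
      by_contra h
      push_neg at h
      have h2 : #(↥Y) * Cardinal.aleph0 ≤ Cardinal.aleph0 * Cardinal.aleph0 :=
        mul_le_mul' h.le le_rfl
      rw [Cardinal.aleph0_mul_aleph0] at h2
      exact absurd (hmain.trans h2) (not_le.2 Cardinal.aleph0_lt_continuum)
    rwa [Cardinal.mul_aleph0_eq haleph] at hmain
  have hYcard : #(↥Y) = Cardinal.continuum := le_antisymm hup hlow
  haveI hinf : Infinite X :=
    Infinite.of_injective (fun c : ℝ => c • x₀) (smul_left_injective ℝ hx₀)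
  have hdens : dens X = Cardinal.aleph0 := by
    haveI : Nonempty {s : Set X // Dense s} := ⟨⟨Set.univ, dense_univ⟩⟩
    apply le_antisymm
    · have h1 : dens X ≤ #(↥(Set.range d)) :=
        ciInf_le (OrderBot.bddBelow _) (⟨Set.range d, hd⟩ : {s : Set X // Dense s})
      haveI := (Set.countable_range d).to_subtype
      exact h1.trans (Cardinal.mk_le_aleph0)
    · apply le_ciInf
      rintro ⟨s, hs⟩
      have hsi : s.Infinite := by
        by_contra h
        rw [Set.not_infinite] at h
        have hclosed : closure s = s := h.isClosed.closure_eq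
        have huniv : (Set.univ : Set X).Finite := by
          rw [← hs.closure_eq, hclosed]; exact h
        exact Set.infinite_univ huniv
      haveI := hsi.to_subtype
      exact Cardinal.aleph0_le_mk _
  constructor
  · obtain ⟨Y₁, hY₁sub, hY₁card⟩ := (Cardinal.le_mk_iff_exists_subset (c := Cardinal.aleph0)).1
      (by rw [hYcard]; exact Cardinal.aleph0_le_continuum)
    refine ⟨Y₁, ?_, ?_⟩
    · rw [hY₁card, hdens]
    · intro Z hZ hmk
      rw [hY₁card] at hmk
      have hZinf : Z.Infinite := by
        rw [← Set.infinite_coe_iff]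
        exact Cardinal.infinite_iff.2 hmk.symm.le
      exact hY2 Z (hZ.trans hY₁sub) hZinf
  · exact ⟨Y, hYcard, fun Z hZ hZinf => hY2 Z hZ hZinf⟩
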